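/- Let p < q < r be primes and n = pqr. Then the independent domination polynomial of the comaximal graph Γ(ℤ_n) is D_i(Γ(ℤ_n), x) = φ(n)·x + x^{p+q+r−2} + x^{pq} + x^{pr} + x^{qr}. -/

import Mathlib

open Polynomial

/-- The comaximal graph of `ℤ/nℤ`: distinct `a, b` are adjacent iff the ideal
generated by `a` and `b` is the whole ring. -/
def comaximalGraph (n : ℕ) : SimpleGraph (ZMod n) where
  Adj a b := a ≠ b ∧ Ideal.span ({a, b} : Set (ZMod n)) = ⊤
  symm := by
    constructor
    rintro a b ⟨hab, h⟩
    refine ⟨hab.symm, ?_⟩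
    rwa [Set.pair_comm]
  loopless := by
    constructor
    rintro a ⟨h, -⟩
    exact h rfl

/-- `S` is an independent dominating set of `G`. -/
def IsIndepDomSet {V : Type*} (G : SimpleGraph V) (S : Finset V) : Prop :=
  (∀ a ∈ S, ∀ b ∈ S, ¬ G.Adj a b) ∧ ∀ v : V, v ∉ S → ∃ u ∈ S, G.Adj u v

/-- The independent domination polynomial `D_i(G, x) = Σ_k d_i(G,k) x^k`. -/
noncomputable def indepDomPoly {V : Type*} (G : SimpleGraph V) : Polynomial ℝ :=
  ∑ k ∈ Finset.range (Nat.card V + 1),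
    Polynomial.C ((Nat.card {S : Finset V // IsIndepDomSet G S ∧ S.card = k}) : ℝ) *
      Polynomial.X ^ k

/-- The independence polynomial `I(G, x) = Σ_k c_k x^k`. -/
noncomputable def indepPoly {V : Type*} (G : SimpleGraph V) : Polynomial ℝ :=
  ∑ k ∈ Finset.range (Nat.card V + 1),
    Polynomial.C ((Nat.card {S : Finset V //
        (∀ a ∈ S, ∀ b ∈ S, ¬ G.Adj a b) ∧ S.card = k}) : ℝ) *
      Polynomial.X ^ k

namespace CmxAux
open Finset

/- ######## abstract part (from t2/t3, verified) ######## -/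
section Abstract
variable {V : Type*} [Fintype V] [DecidableEq V]

theorem classify (G : SimpleGraph V) (z : V → Finset (Fin 3))
    (hAdj : ∀ a b, G.Adj a b ↔ a ≠ b ∧ z a ∩ z b = ∅)
    (hex : ∀ s : Finset (Fin 3), ∃ u, z u = s) (S : Finset V) :
    IsIndepDomSet G S ↔
      ((∃ u, z u = ∅ ∧ S = {u}) ∨ (∃ i, S = univ.filter (fun a => i ∈ z a)) ∨
        S = univ.filter (fun a => 2 ≤ (z a).card)) := by
  constructor
  · rintro ⟨hind, hdom⟩
    by_cases hu : ∃ u ∈ S, z u = ∅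
    · obtain ⟨u, huS, hz⟩ := hu
      left
      refine ⟨u, hz, ?_⟩
      ext b
      simp only [Finset.mem_singleton]
      constructor
      · intro hb
        by_contra hne
        exact hind u huS b hb ((hAdj u b).2 ⟨fun h => hne h.symm, by simp [hz]⟩)
      · rintro rfl; exact huS
    · push_neg at hu
      by_cases hi : ∃ i, ∀ a ∈ S, i ∈ z a
      · obtain ⟨i, hi⟩ := hi
        right; left
        refine ⟨i, ?_⟩
        ext a
        simp only [Finset.mem_filter, Finset.mem_univ, true_and]
        constructor
        · exact hi a
        · intro ha
          by_contra haS
          obtain ⟨u, huS, hadj⟩ := hdom a haS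
          have h2 := (hAdj u a).1 hadj
          have : i ∈ z u ∩ z a := Finset.mem_inter.2 ⟨hi u huS, ha⟩
          rw [h2.2] at this
          exact absurd this (Finset.notMem_empty i)
      · push_neg at hi
        right; right
        have key : ∀ a ∈ S, 2 ≤ (z a).card := by
          intro a haS
          by_contra hlt
          push_neg at hlt
          obtain ⟨j, hj⟩ := Finset.card_le_one_iff_subset_singleton.1 (Nat.lt_succ_iff.1 hlt)
          have hja : j ∈ z a := by
            obtain ⟨k, hk⟩ := hu a haS
            have := hj hk
            rw [Finset.mem_singleton] at this
            exact this ▸ hk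
          obtain ⟨b, hbS, hbj⟩ := hi j
          have hne : a ≠ b := fun h => hbj (h ▸ hja)
          refine hind a haS b hbS ((hAdj a b).2 ⟨hne, ?_⟩)
          apply Finset.eq_empty_of_forall_notMem
          intro k hk
          rw [Finset.mem_inter] at hk
          have := hj hk.1
          rw [Finset.mem_singleton] at this
          exact hbj (this ▸ hk.2)
        ext a
        simp only [Finset.mem_filter, Finset.mem_univ, true_and]
        constructor
        · exact key a
        · intro ha
          by_contra haS
          obtain ⟨u, huS, hadj⟩ := hdom a haS
          have h2 := (hAdj u a).1 hadj
          have hcard : (z u ∩ z a).card + (z u ∪ z a).card = (z u).card + (z a).card :=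
            Finset.card_inter_add_card_union _ _
          have h3 : (z u ∪ z a).card ≤ 3 := by
            have := Finset.card_le_univ (z u ∪ z a)
            simpa using this
          have h4 := key u huS
          rw [h2.2] at hcard
          simp at hcard
          omega
  · rintro (⟨u, hz, rfl⟩ | ⟨i, rfl⟩ | rfl)
    · constructor
      · intro a ha b hb
        simp only [Finset.mem_singleton] at ha hb
        subst ha; subst hb
        exact G.irrefl
      · intro v hv
        rw [Finset.mem_singleton] at hv
        exact ⟨u, Finset.mem_singleton_self u, (hAdj u v).2 ⟨fun h => hv h.symm, by simp [hz]⟩⟩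
    · constructor
      · intro a ha b hb hadj
        rw [Finset.mem_filter] at ha hb
        have h2 := (hAdj a b).1 hadj
        have : i ∈ z a ∩ z b := Finset.mem_inter.2 ⟨ha.2, hb.2⟩
        rw [h2.2] at this
        exact absurd this (Finset.notMem_empty i)
      · intro v hv
        rw [Finset.mem_filter] at hv
        push_neg at hv
        have hiv : i ∉ z v := hv (Finset.mem_univ v)
        obtain ⟨u, hu⟩ := hex {i}
        refine ⟨u, Finset.mem_filter.2 ⟨Finset.mem_univ u, by simp [hu]⟩, (hAdj u v).2 ⟨?_, ?_⟩⟩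
        · intro h
          exact hiv (h ▸ (by simp [hu] : i ∈ z u))
        · apply Finset.eq_empty_of_forall_notMem
          intro k hk
          rw [Finset.mem_inter, hu, Finset.mem_singleton] at hk
          exact hiv (hk.1 ▸ hk.2)
    · constructor
      · intro a ha b hb hadj
        rw [Finset.mem_filter] at ha hb
        have h2 := (hAdj a b).1 hadj
        have hcard : (z a ∩ z b).card + (z a ∪ z b).card = (z a).card + (z b).card :=
          Finset.card_inter_add_card_union _ _
        have h3 : (z a ∪ z b).card ≤ 3 := by
          have := Finset.card_le_univ (z a ∪ z b)
          simpa using this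
        rw [h2.2] at hcard
        simp at hcard
        omega
      · intro v hv
        rw [Finset.mem_filter] at hv
        push_neg at hv
        have hle : (z v).card ≤ 1 := by
          have := hv (Finset.mem_univ v); omega
        obtain ⟨j, hj⟩ := Finset.card_le_one_iff_subset_singleton.1 hle
        obtain ⟨u, hu⟩ := hex ({j}ᶜ)
        have hcu : (z u).card = 2 := by
          rw [hu, Finset.card_compl]
          simp
        refine ⟨u, Finset.mem_filter.2 ⟨Finset.mem_univ u, by omega⟩, (hAdj u v).2 ⟨?_, ?_⟩⟩
        · intro h
          rw [h] at hcu; omega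
        · apply Finset.eq_empty_of_forall_notMem
          intro k hk
          rw [Finset.mem_inter, hu, Finset.mem_compl, Finset.mem_singleton] at hk
          have := hj hk.2
          rw [Finset.mem_singleton] at this
          exact hk.1 this

omit [DecidableEq V] in
theorem poly_eq (G : SimpleGraph V) (U : Finset (Finset V))
    (hU : ∀ S, IsIndepDomSet G S ↔ S ∈ U) :
    indepDomPoly G = ∑ S ∈ U, (X : ℝ[X]) ^ S.card := by
  classical
  have hcard : ∀ k, Nat.card {S : Finset V // IsIndepDomSet G S ∧ S.card = k}
      = (U.filter (fun S => S.card = k)).card := by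
    intro k
    rw [Nat.card_congr (Equiv.subtypeEquivRight (q := fun S => S ∈ U.filter (fun S => S.card = k))
      (fun S => by simp [hU, Finset.mem_filter, and_comm]))]
    rw [Nat.card_eq_fintype_card, Fintype.card_coe]
  unfold indepDomPoly
  have : ∀ k, (C ((Nat.card {S : Finset V // IsIndepDomSet G S ∧ S.card = k}) : ℝ) * X ^ k : ℝ[X])
      = ∑ S ∈ U.filter (fun S => S.card = k), X ^ S.card := by
    intro k
    rw [hcard]
    rw [Finset.sum_congr rfl (fun S hS => by rw [(Finset.mem_filter.1 hS).2])]
    rw [Finset.sum_const, nsmul_eq_mul]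
    rw [Polynomial.C_eq_natCast]
  rw [Finset.sum_congr rfl (fun k _ => this k)]
  rw [Nat.card_eq_fintype_card]
  exact Finset.sum_fiberwise_of_maps_to (fun S _ => Finset.mem_range.2
    (Nat.lt_succ_of_le (by simpa using Finset.card_le_univ S))) _

end Abstract

/- ######## concrete part (from t4/t5, verified) ######## -/

def mvec (p q r : ℕ) : Fin 3 → ℕ := ![p, q, r]

lemma mdvd (p q r : ℕ) (i : Fin 3) : mvec p q r i ∣ p * q * r := by
  fin_cases i <;> simp [mvec]
  · exact Dvd.dvd.mul_right (dvd_mul_right p q) r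
  · exact Dvd.dvd.mul_right (dvd_mul_left q p) r

lemma mprime {p q r : ℕ} (hp : p.Prime) (hq : q.Prime) (hr : r.Prime) (i : Fin 3) :
    (mvec p q r i).Prime := by fin_cases i <;> simpa [mvec]

lemma minj {p q r : ℕ} (hp : p.Prime) (hpq : p < q) (hqr : q < r) :
    Function.Injective (mvec p q r) := by
  intro i j h
  fin_cases i <;> fin_cases j <;> simp_all [mvec] <;> omega

lemma prime_eq_mvec {p q r : ℕ} (hp : p.Prime) (hq : q.Prime) (hr : r.Prime)
    {s : ℕ} (hs : s.Prime) (hdvd : s ∣ p * q * r) : ∃ i, s = mvec p q r i := by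
  rcases (Nat.Prime.dvd_mul hs).1 hdvd with h | h
  · rcases (Nat.Prime.dvd_mul hs).1 h with h' | h'
    · exact ⟨0, (Nat.prime_dvd_prime_iff_eq hs hp).1 h'⟩
    · exact ⟨1, (Nat.prime_dvd_prime_iff_eq hs hq).1 h'⟩
  · exact ⟨2, (Nat.prime_dvd_prime_iff_eq hs hr).1 h⟩

def zfun (p q r : ℕ) (a : ZMod (p * q * r)) : Finset (Fin 3) :=
  univ.filter (fun i => mvec p q r i ∣ a.val)

lemma mem_zfun (p q r : ℕ) (a : ZMod (p * q * r)) (i : Fin 3) :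
    i ∈ zfun p q r a ↔ mvec p q r i ∣ a.val := by simp [zfun]

theorem span_iff {p q r : ℕ} (hp : p.Prime) (hq : q.Prime) (hr : r.Prime)
    (a b : ZMod (p * q * r)) :
    Ideal.span ({a, b} : Set (ZMod (p * q * r))) = ⊤ ↔
      ∀ i : Fin 3, ¬ (mvec p q r i ∣ a.val ∧ mvec p q r i ∣ b.val) := by
  haveI : NeZero (p * q * r) :=
    ⟨Nat.mul_ne_zero (Nat.mul_ne_zero hp.pos.ne' hq.pos.ne') hr.pos.ne'⟩
  constructor
  · intro htop i ⟨hia, hib⟩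
    obtain ⟨x, y, hxy⟩ := Ideal.mem_span_pair.1 ((Ideal.eq_top_iff_one _).1 htop)
    haveI : Fact (1 < mvec p q r i) := ⟨(mprime hp hq hr i).one_lt⟩
    set f := ZMod.castHom (mdvd p q r i) (ZMod (mvec p q r i)) with hf
    have hfa : f a = 0 := by
      rw [ZMod.castHom_apply, ← ZMod.natCast_val, ZMod.natCast_eq_zero_iff]
      exact hia
    have hfb : f b = 0 := by
      rw [ZMod.castHom_apply, ← ZMod.natCast_val, ZMod.natCast_eq_zero_iff]
      exact hib
    have := congrArg f hxy
    rw [map_add, map_mul, map_mul, map_one, hfa, hfb, mul_zero, mul_zero, add_zero] at this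
    exact zero_ne_one this
  · intro h
    set g := Nat.gcd a.val b.val with hg
    have hcop : Nat.Coprime g (p * q * r) := by
      rw [Nat.Coprime]
      by_contra hne
      obtain ⟨s, hs, hsd⟩ := Nat.exists_prime_and_dvd hne
      obtain ⟨i, rfl⟩ := prime_eq_mvec hp hq hr hs
        (dvd_trans hsd (Nat.gcd_dvd_right _ _))
      have hsg : mvec p q r i ∣ g := dvd_trans hsd (Nat.gcd_dvd_left _ _)
      exact h i ⟨dvd_trans hsg (Nat.gcd_dvd_left _ _), dvd_trans hsg (Nat.gcd_dvd_right _ _)⟩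
    have hunit : IsUnit (g : ZMod (p * q * r)) := (ZMod.isUnit_iff_coprime g _).2 hcop
    obtain ⟨c, hc⟩ := hunit.exists_left_inv
    have hbez := Nat.gcd_eq_gcd_ab a.val b.val
    have hcast : (g : ZMod (p * q * r)) =
        a * ((Nat.gcdA a.val b.val : ℤ) : ZMod (p * q * r)) +
        b * ((Nat.gcdB a.val b.val : ℤ) : ZMod (p * q * r)) := by
      have := congrArg (fun t : ℤ => (t : ZMod (p * q * r))) hbez
      push_cast at this
      rw [ZMod.natCast_val, ZMod.cast_id, ZMod.natCast_val, ZMod.cast_id] at this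
      rw [this]
    rw [Ideal.eq_top_iff_one, Ideal.mem_span_pair]
    refine ⟨c * ((Nat.gcdA a.val b.val : ℤ) : ZMod (p * q * r)),
           c * ((Nat.gcdB a.val b.val : ℤ) : ZMod (p * q * r)), ?_⟩
    calc c * ((Nat.gcdA a.val b.val : ℤ) : ZMod (p * q * r)) * a +
          c * ((Nat.gcdB a.val b.val : ℤ) : ZMod (p * q * r)) * b
        = c * (a * ((Nat.gcdA a.val b.val : ℤ) : ZMod (p * q * r)) +
            b * ((Nat.gcdB a.val b.val : ℤ) : ZMod (p * q * r))) := by ring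
      _ = c * (g : ZMod (p * q * r)) := by rw [hcast]
      _ = 1 := hc

theorem zfun_exists {p q r : ℕ} (hp : p.Prime) (hq : q.Prime) (hr : r.Prime)
    (hpq : p < q) (hqr : q < r) (s : Finset (Fin 3)) :
    ∃ u : ZMod (p * q * r), zfun p q r u = s := by
  haveI : NeZero (p * q * r) :=
    ⟨Nat.mul_ne_zero (Nat.mul_ne_zero hp.pos.ne' hq.pos.ne') hr.pos.ne'⟩
  refine ⟨((∏ i ∈ s, mvec p q r i : ℕ) : ZMod (p * q * r)), ?_⟩
  ext j
  rw [mem_zfun, ZMod.val_natCast, Nat.dvd_mod_iff (mdvd p q r j)]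
  constructor
  · intro hdvd
    obtain ⟨i, hi, hdd⟩ := ((mprime hp hq hr j).prime.dvd_finset_prod_iff _).1 hdvd
    have := (Nat.prime_dvd_prime_iff_eq (mprime hp hq hr j) (mprime hp hq hr i)).1 hdd
    rwa [minj hp hpq hqr this]
  · intro hj
    exact Finset.dvd_prod_of_mem _ hj

lemma card_filter_val {n : ℕ} [NeZero n] (P : ℕ → Prop) [DecidablePred P] :
    (univ.filter (fun a : ZMod n => P a.val)).card = ((range n).filter P).card := by
  apply Finset.card_nbij (fun a => a.val)
  · intro a ha
    simp only [Finset.mem_coe, Finset.mem_filter, Finset.mem_range, Finset.mem_univ, true_and] at *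
    exact ⟨ZMod.val_lt a, ha⟩
  · intro x _ y _ h
    exact ZMod.val_injective n h
  · intro k hk
    rw [Finset.mem_coe, Finset.mem_filter, Finset.mem_range] at hk
    refine ⟨(k : ZMod n), ?_, ?_⟩
    · rw [Finset.mem_coe, Finset.mem_filter]
      exact ⟨Finset.mem_univ _, by rw [ZMod.val_natCast, Nat.mod_eq_of_lt hk.1]; exact hk.2⟩
    · simp [ZMod.val_natCast, Nat.mod_eq_of_lt hk.1]

lemma card_range_dvd {n d : ℕ} (hd : 0 < d) (hdn : d ∣ n) :
    ((range n).filter (fun k => d ∣ k)).card = n / d := by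
  have h := Finset.card_nbij (s := range (n / d)) (t := (range n).filter (fun k => d ∣ k))
    (fun j => d * j) ?_ ?_ ?_
  · rw [← h, Finset.card_range]
  · intro j hj
    rw [Finset.mem_coe, Finset.mem_range] at hj
    rw [Finset.mem_coe, Finset.mem_filter, Finset.mem_range]
    refine ⟨?_, Dvd.intro j rfl⟩
    calc d * j < d * (n / d) := (Nat.mul_lt_mul_left hd).2 hj
      _ = n := Nat.mul_div_cancel' hdn
  · intro x _ y _ h
    exact Nat.eq_of_mul_eq_mul_left hd h
  · intro k hk
    rw [Finset.mem_coe, Finset.mem_filter, Finset.mem_range] at hk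
    refine ⟨k / d, ?_, Nat.mul_div_cancel' hk.2⟩
    rw [Finset.mem_coe, Finset.mem_range]
    by_contra hle
    push_neg at hle
    have : n ≤ k := by
      calc n = d * (n / d) := (Nat.mul_div_cancel' hdn).symm
        _ ≤ d * (k / d) := Nat.mul_le_mul_left d hle
        _ = k := Nat.mul_div_cancel' hk.2
    omega

lemma card_mult {n d : ℕ} [NeZero n] (hd : 0 < d) (hdn : d ∣ n) :
    (univ.filter (fun a : ZMod n => d ∣ a.val)).card = n / d :=
  (card_filter_val _).trans (card_range_dvd hd hdn)

lemma card_coprime (n : ℕ) [NeZero n] :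
    (univ.filter (fun a : ZMod n => Nat.Coprime a.val n)).card = n.totient := by
  have h1 := card_filter_val (n := n) (fun k => Nat.Coprime k n)
  rw [Nat.totient_eq_card_coprime]
  rw [show (univ.filter (fun a : ZMod n => Nat.Coprime a.val n)) =
      (univ.filter (fun a : ZMod n => (fun k => Nat.Coprime k n) a.val)) from rfl, h1]
  congr 1
  apply Finset.filter_congr
  intro k _
  exact ⟨fun h => Nat.coprime_comm.1 h, fun h => Nat.coprime_comm.1 h⟩

end CmxAux


/-- For `n = pqr` with primes `p < q < r`,
`D_i(Γ(ℤ_n), x) = φ(n)·x + x^(p+q+r−2) + x^(pq) + x^(pr) + x^(qr)`. -/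
theorem stmt_4 (p q r : ℕ) (hp : p.Prime) (hq : q.Prime) (hr : r.Prime)
    (hpq : p < q) (hqr : q < r) :
    indepDomPoly (comaximalGraph (p * q * r)) =
      Polynomial.C ((Nat.totient (p * q * r) : ℝ)) * Polynomial.X +
        Polynomial.X ^ (p + q + r - 2) + Polynomial.X ^ (p * q) +
        Polynomial.X ^ (p * r) + Polynomial.X ^ (q * r) := by
  classical
  haveI : NeZero (p * q * r) :=
    ⟨Nat.mul_ne_zero (Nat.mul_ne_zero hp.pos.ne' hq.pos.ne') hr.pos.ne'⟩
  set n := p * q * r with hn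
  set z := CmxAux.zfun p q r with hzdef
  set G := comaximalGraph n with hGdef
  open Finset in
  -- adjacency characterization
  have hAdj : ∀ a b, G.Adj a b ↔ a ≠ b ∧ z a ∩ z b = ∅ := by
    intro a b
    have h1 : G.Adj a b ↔ a ≠ b ∧ Ideal.span ({a, b} : Set (ZMod n)) = ⊤ := Iff.rfl
    rw [h1, CmxAux.span_iff hp hq hr a b]
    apply and_congr_right
    intro _
    rw [Finset.eq_empty_iff_forall_notMem]
    apply forall_congr'
    intro i
    rw [Finset.mem_inter, CmxAux.mem_zfun, CmxAux.mem_zfun]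
  have hex : ∀ s : Finset (Fin 3), ∃ u : ZMod n, z u = s :=
    CmxAux.zfun_exists hp hq hr hpq hqr
  -- candidate sets
  set A : Fin 3 → Finset (ZMod n) := fun i => Finset.univ.filter (fun a => i ∈ z a) with hAdef
  set T : Finset (ZMod n) := Finset.univ.filter (fun a => 2 ≤ (z a).card) with hTdef
  set Us : Finset (ZMod n) := Finset.univ.filter (fun a => z a = ∅) with hUsdef
  set U : Finset (Finset (ZMod n)) :=
    (Us.image fun u => ({u} : Finset (ZMod n))) ∪ {A 0, A 1, A 2, T} with hUdef
  have hU : ∀ S, IsIndepDomSet G S ↔ S ∈ U := by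
    intro S
    rw [CmxAux.classify G z hAdj hex]
    simp only [hUdef, Finset.mem_union, Finset.mem_image, Finset.mem_insert,
      Finset.mem_singleton, hUsdef, Finset.mem_filter, Finset.mem_univ, true_and]
    constructor
    · rintro (⟨u, hzu, rfl⟩ | ⟨i, rfl⟩ | rfl)
      · exact Or.inl ⟨u, hzu, rfl⟩
      · refine Or.inr ?_
        fin_cases i
        · exact Or.inl rfl
        · exact Or.inr (Or.inl rfl)
        · exact Or.inr (Or.inr (Or.inl rfl))
      · exact Or.inr (Or.inr (Or.inr (Or.inr rfl)))
    · rintro (⟨u, hzu, rfl⟩ | h0 | h1 | h2 | hT)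
      · exact Or.inl ⟨u, hzu, rfl⟩
      · exact Or.inr (Or.inl ⟨0, h0⟩)
      · exact Or.inr (Or.inl ⟨1, h1⟩)
      · exact Or.inr (Or.inl ⟨2, h2⟩)
      · exact Or.inr (Or.inr hT)
  -- coprimality
  have hcpq : Nat.Coprime p q := (Nat.coprime_primes hp hq).2 hpq.ne
  have hcpr : Nat.Coprime p r := (Nat.coprime_primes hp hr).2 (hpq.trans hqr).ne
  have hcqr : Nat.Coprime q r := (Nat.coprime_primes hq hr).2 hqr.ne
  -- cardinalities of the A i
  have hzmem : ∀ (i : Fin 3) (a : ZMod n), i ∈ z a ↔ CmxAux.mvec p q r i ∣ a.val :=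
    fun i a => CmxAux.mem_zfun p q r a i
  have cA0 : (A 0).card = q * r := by
    have hcong : A 0 = Finset.univ.filter (fun a : ZMod n => p ∣ a.val) := by
      apply Finset.filter_congr
      intro a _
      rw [hzmem]
      simp [CmxAux.mvec]
    rw [hcong, CmxAux.card_mult hp.pos ⟨q * r, by rw [hn]; ring⟩, hn,
      mul_assoc, Nat.mul_div_cancel_left _ hp.pos]
  have cA1 : (A 1).card = p * r := by
    have hcong : A 1 = Finset.univ.filter (fun a : ZMod n => q ∣ a.val) := by
      apply Finset.filter_congr
      intro a _
      rw [hzmem]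
      simp [CmxAux.mvec]
    rw [hcong, CmxAux.card_mult hq.pos ⟨p * r, by rw [hn]; ring⟩, hn,
      show p * q * r = q * (p * r) by ring, Nat.mul_div_cancel_left _ hq.pos]
  have cA2 : (A 2).card = p * q := by
    have hcong : A 2 = Finset.univ.filter (fun a : ZMod n => r ∣ a.val) := by
      apply Finset.filter_congr
      intro a _
      rw [hzmem]
      simp [CmxAux.mvec]
    rw [hcong, CmxAux.card_mult hr.pos ⟨p * q, by rw [hn]; ring⟩, hn,
      show p * q * r = r * (p * q) by ring, Nat.mul_div_cancel_left _ hr.pos]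
  -- cardinality of T
  set W1 : Finset (ZMod n) := Finset.univ.filter (fun a => p * q ∣ a.val) with hW1
  set W2 : Finset (ZMod n) := Finset.univ.filter (fun a => p * r ∣ a.val) with hW2
  set W3 : Finset (ZMod n) := Finset.univ.filter (fun a => q * r ∣ a.val) with hW3
  set O : Finset (ZMod n) := Finset.univ.filter (fun a => n ∣ a.val) with hO
  have hdvd_pq : ∀ v : ℕ, (p ∣ v ∧ q ∣ v) ↔ p * q ∣ v := fun v =>
    ⟨fun ⟨h1, h2⟩ => hcpq.mul_dvd_of_dvd_of_dvd h1 h2,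
     fun h => ⟨dvd_trans (dvd_mul_right p q) h, dvd_trans (dvd_mul_left q p) h⟩⟩
  have hdvd_pr : ∀ v : ℕ, (p ∣ v ∧ r ∣ v) ↔ p * r ∣ v := fun v =>
    ⟨fun ⟨h1, h2⟩ => hcpr.mul_dvd_of_dvd_of_dvd h1 h2,
     fun h => ⟨dvd_trans (dvd_mul_right p r) h, dvd_trans (dvd_mul_left r p) h⟩⟩
  have hdvd_qr : ∀ v : ℕ, (q ∣ v ∧ r ∣ v) ↔ q * r ∣ v := fun v =>
    ⟨fun ⟨h1, h2⟩ => hcqr.mul_dvd_of_dvd_of_dvd h1 h2,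
     fun h => ⟨dvd_trans (dvd_mul_right q r) h, dvd_trans (dvd_mul_left r q) h⟩⟩
  have hdvd_n : ∀ v : ℕ, (p ∣ v ∧ q ∣ v ∧ r ∣ v) ↔ n ∣ v := by
    intro v
    rw [hn]
    constructor
    · rintro ⟨h1, h2, h3⟩
      have hc : Nat.Coprime (p * q) r := Nat.Coprime.mul hcpr hcqr
      exact hc.mul_dvd_of_dvd_of_dvd ((hdvd_pq v).1 ⟨h1, h2⟩) h3
    · intro h
      refine ⟨dvd_trans ?_ h, dvd_trans ?_ h, dvd_trans ?_ h⟩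
      · exact Dvd.dvd.mul_right (dvd_mul_right p q) r
      · exact Dvd.dvd.mul_right (dvd_mul_left q p) r
      · exact dvd_mul_left r (p * q)
  have hz2 : ∀ s : Finset (Fin 3), 2 ≤ s.card ↔
      (((0 : Fin 3) ∈ s ∧ (1 : Fin 3) ∈ s) ∨ ((0 : Fin 3) ∈ s ∧ (2 : Fin 3) ∈ s) ∨
       ((1 : Fin 3) ∈ s ∧ (2 : Fin 3) ∈ s)) := by decide
  have hzval : ∀ (a : ZMod n),
      ((0 : Fin 3) ∈ z a ↔ p ∣ a.val) ∧ ((1 : Fin 3) ∈ z a ↔ q ∣ a.val) ∧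
      ((2 : Fin 3) ∈ z a ↔ r ∣ a.val) := by
    intro a
    refine ⟨?_, ?_, ?_⟩ <;> (rw [hzmem]; simp [CmxAux.mvec])
  have hT_eq : T = (W1 ∪ W2) ∪ W3 := by
    ext a
    simp only [hTdef, hW1, hW2, hW3, Finset.mem_filter, Finset.mem_union, Finset.mem_univ,
      true_and]
    rw [hz2 (z a), (hzval a).1, (hzval a).2.1, (hzval a).2.2,
      ← hdvd_pq, ← hdvd_pr, ← hdvd_qr]
    tauto
  have cW1 : W1.card = r := by
    rw [hW1, CmxAux.card_mult (Nat.mul_pos hp.pos hq.pos) ⟨r, by rw [hn]⟩, hn,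
      Nat.mul_div_cancel_left _ (Nat.mul_pos hp.pos hq.pos)]
  have cW2 : W2.card = q := by
    rw [hW2, CmxAux.card_mult (Nat.mul_pos hp.pos hr.pos) ⟨q, by rw [hn]; ring⟩, hn,
      show p * q * r = p * r * q by ring, Nat.mul_div_cancel_left _ (Nat.mul_pos hp.pos hr.pos)]
  have cW3 : W3.card = p := by
    rw [hW3, CmxAux.card_mult (Nat.mul_pos hq.pos hr.pos) ⟨p, by rw [hn]; ring⟩, hn,
      show p * q * r = q * r * p by ring, Nat.mul_div_cancel_left _ (Nat.mul_pos hq.pos hr.pos)]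
  have cO : O.card = 1 := by
    rw [hO, CmxAux.card_mult (Nat.pos_of_ne_zero (NeZero.ne n)) dvd_rfl,
      Nat.div_self (Nat.pos_of_ne_zero (NeZero.ne n))]
  have hW12 : W1 ∩ W2 = O := by
    ext a
    simp only [hW1, hW2, hO, Finset.mem_inter, Finset.mem_filter, Finset.mem_univ, true_and]
    rw [← hdvd_pq, ← hdvd_pr, ← hdvd_n]
    tauto
  have hW13 : W1 ∩ W3 = O := by
    ext a
    simp only [hW1, hW3, hO, Finset.mem_inter, Finset.mem_filter, Finset.mem_univ, true_and]
    rw [← hdvd_pq, ← hdvd_qr, ← hdvd_n]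
    tauto
  have hW23 : W2 ∩ W3 = O := by
    ext a
    simp only [hW2, hW3, hO, Finset.mem_inter, Finset.mem_filter, Finset.mem_univ, true_and]
    rw [← hdvd_pr, ← hdvd_qr, ← hdvd_n]
    tauto
  have cT : T.card = p + q + r - 2 := by
    have e12 : (W1 ∩ W2).card + (W1 ∪ W2).card = W1.card + W2.card :=
      Finset.card_inter_add_card_union _ _
    have hinter : (W1 ∪ W2) ∩ W3 = O := by
      rw [Finset.union_inter_distrib_right, hW13, hW23, Finset.union_self]
    have e3 : ((W1 ∪ W2) ∩ W3).card + ((W1 ∪ W2) ∪ W3).card = (W1 ∪ W2).card + W3.card :=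
      Finset.card_inter_add_card_union _ _
    rw [hW12, cO, cW1, cW2] at e12
    rw [hinter, cO, cW3] at e3
    rw [hT_eq]
    have := hp.two_le
    have := hq.two_le
    have := hr.two_le
    omega
  -- cardinality of Us
  have cUs : Us.card = n.totient := by
    have hcong : Us = Finset.univ.filter (fun a : ZMod n => Nat.Coprime a.val n) := by
      apply Finset.filter_congr
      intro a _
      constructor
      · intro hza
        rw [Nat.Coprime]
        by_contra hne
        obtain ⟨s, hs, hsd⟩ := Nat.exists_prime_and_dvd hne
        obtain ⟨i, rfl⟩ := CmxAux.prime_eq_mvec hp hq hr hs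
          (dvd_trans hsd (Nat.gcd_dvd_right _ _))
        have : i ∈ z a := (hzmem i a).2 (dvd_trans hsd (Nat.gcd_dvd_left _ _))
        rw [hza] at this
        exact absurd this (Finset.notMem_empty i)
      · intro hcop
        apply Finset.eq_empty_of_forall_notMem
        intro i hi
        have h1 : CmxAux.mvec p q r i ∣ a.val := (hzmem i a).1 hi
        have h2 : CmxAux.mvec p q r i ∣ Nat.gcd a.val n :=
          Nat.dvd_gcd h1 (CmxAux.mdvd p q r i)
        rw [hcop] at h2
        exact (CmxAux.mprime hp hq hr i).one_lt.ne' (Nat.eq_one_of_dvd_one h2)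
    rw [hcong, CmxAux.card_coprime n]
  -- distinctness witnesses
  obtain ⟨u0, hu0⟩ := hex {0}
  obtain ⟨u1, hu1⟩ := hex {1}
  obtain ⟨u2, hu2⟩ := hex {2}
  have mem0 : u0 ∈ A 0 := by
    rw [hAdef]; exact Finset.mem_filter.2 ⟨Finset.mem_univ _, by rw [hu0]; decide⟩
  have mem1 : u1 ∈ A 1 := by
    rw [hAdef]; exact Finset.mem_filter.2 ⟨Finset.mem_univ _, by rw [hu1]; decide⟩
  have mem2 : u2 ∈ A 2 := by
    rw [hAdef]; exact Finset.mem_filter.2 ⟨Finset.mem_univ _, by rw [hu2]; decide⟩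
  have nm01 : u0 ∉ A 1 := by
    rw [hAdef]; simp only [Finset.mem_filter, Finset.mem_univ, true_and]
    rw [hu0]; decide
  have nm02 : u0 ∉ A 2 := by
    rw [hAdef]; simp only [Finset.mem_filter, Finset.mem_univ, true_and]
    rw [hu0]; decide
  have nm12 : u1 ∉ A 2 := by
    rw [hAdef]; simp only [Finset.mem_filter, Finset.mem_univ, true_and]
    rw [hu1]; decide
  have nm0T : u0 ∉ T := by
    rw [hTdef]; simp only [Finset.mem_filter, Finset.mem_univ, true_and]
    rw [hu0]; decide
  have nm1T : u1 ∉ T := by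
    rw [hTdef]; simp only [Finset.mem_filter, Finset.mem_univ, true_and]
    rw [hu1]; decide
  have nm2T : u2 ∉ T := by
    rw [hTdef]; simp only [Finset.mem_filter, Finset.mem_univ, true_and]
    rw [hu2]; decide
  have hne01 : A 0 ≠ A 1 := fun h => nm01 (h ▸ mem0)
  have hne02 : A 0 ≠ A 2 := fun h => nm02 (h ▸ mem0)
  have hne12 : A 1 ≠ A 2 := fun h => nm12 (h ▸ mem1)
  have hne0T : A 0 ≠ T := fun h => nm0T (h ▸ mem0)
  have hne1T : A 1 ≠ T := fun h => nm1T (h ▸ mem1)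
  have hne2T : A 2 ≠ T := fun h => nm2T (h ▸ mem2)
  -- disjointness of the two parts of U
  have hp2 := hp.two_le
  have hq2 := hq.two_le
  have hr2 := hr.two_le
  have hb0 : 4 ≤ q * r := Nat.mul_le_mul hq2 hr2
  have hb1 : 4 ≤ p * r := Nat.mul_le_mul hp2 hr2
  have hb2 : 4 ≤ p * q := Nat.mul_le_mul hp2 hq2
  have hdisj : Disjoint (Us.image fun u => ({u} : Finset (ZMod n)))
      ({A 0, A 1, A 2, T} : Finset (Finset (ZMod n))) := by
    rw [Finset.disjoint_left]
    intro S hS1 hS2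
    obtain ⟨u, _, rfl⟩ := Finset.mem_image.1 hS1
    have hc1 : ({u} : Finset (ZMod n)).card = 1 := Finset.card_singleton u
    simp only [Finset.mem_insert, Finset.mem_singleton] at hS2
    rcases hS2 with h | h | h | h
    · rw [h, cA0] at hc1; omega
    · rw [h, cA1] at hc1; omega
    · rw [h, cA2] at hc1; omega
    · rw [h, cT] at hc1; omega
  -- assemble
  rw [CmxAux.poly_eq G U hU, hUdef, Finset.sum_union hdisj,
    Finset.sum_image (fun x _ y _ h => Finset.singleton_injective h)]
  have hsing : ∀ u ∈ Us, ((Polynomial.X : ℝ[X]) ^ ({u} : Finset (ZMod n)).card)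
      = (Polynomial.X : ℝ[X]) := by
    intro u _
    rw [Finset.card_singleton, pow_one]
  rw [Finset.sum_congr rfl hsing, Finset.sum_const, cUs]
  have hquad : ({A 0, A 1, A 2, T} : Finset (Finset (ZMod n)))
      = insert (A 0) (insert (A 1) (insert (A 2) ({T} : Finset (Finset (ZMod n))))) := rfl
  rw [hquad, Finset.sum_insert (by simp [hne01, hne02, hne0T]),
    Finset.sum_insert (by simp [hne12, hne1T]),
    Finset.sum_insert (by simp [hne2T]), Finset.sum_singleton,
    cA0, cA1, cA2, cT]
  rw [nsmul_eq_mul, ← Polynomial.C_eq_natCast]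
  ring
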